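/- Let V be a real inner product space, let ξ₁, ξ₂ ∈ V be orthonormal unit vectors, let η₁, η₂ be the dual 1-forms η_α(X) = ⟨X, ξ_α⟩, and let f : V → V be a linear map with f ξ₁ = 0 and f ξ₂ = 0. Suppose R : V × V × V → V is a trilinear map which for some real constants F₁, …, F₈ satisfies, for all X, Y, Z ∈ V, the generalized S-space-form curvature identity R(X,Y)Z = F₁{⟨Y,Z⟩X − ⟨X,Z⟩Y} + F₂{⟨X,fZ⟩fY − ⟨Y,fZ⟩fX + 2⟨X,fY⟩fZ} + F₃{η₁(X)η₁(Z)Y − η₁(Y)η₁(Z)X + ⟨X,Z⟩η₁(Y)ξ₁ − ⟨Y,Z⟩η₁(X)ξ₁} + F₄{η₂(X)η₂(Z)Y − η₂(Y)η₂(Z)X + ⟨X,Z⟩η₂(Y)ξ₂ − ⟨Y,Z⟩η₂(X)ξ₂} + F₅{η₁(X)η₂(Z)Y − η₁(Y)η₂(Z)X + ⟨X,Z⟩η₁(Y)ξ₂ − ⟨Y,Z⟩η₁(X)ξ₂} + F₆{η₂(X)η₁(Z)Y − η₂(Y)η₁(Z)X + ⟨X,Z⟩η₂(Y)ξ₁ −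 ⟨Y,Z⟩η₂(X)ξ₁} + F₇{η₁(X)η₂(Y)η₂(Z)ξ₁ − η₂(X)η₁(Y)η₂(Z)ξ₁} + F₈{η₂(X)η₁(Y)η₁(Z)ξ₂ − η₁(X)η₂(Y)η₁(Z)ξ₂}. Suppose moreover that R satisfies the standard skew-symmetry of a Riemannian curvature tensor: ⟨R(X,Y)Z, W⟩ = −⟨R(X,Y)W, Z⟩ for all X, Y, Z, W ∈ V. Then F₇ = F₈. -/

import Mathlib

open scoped RealInnerProductSpace

/-- In a generalized S-space-form, F₇ = F₈ (pointwise linear-algebraic form). -/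
theorem generalized_S_space_form_F7_eq_F8
    {V : Type*} [NormedAddCommGroup V] [InnerProductSpace ℝ V]
    (ξ₁ ξ₂ : V) (hn₁ : ‖ξ₁‖ = 1) (hn₂ : ‖ξ₂‖ = 1) (horth : ⟪ξ₁, ξ₂⟫ = 0)
    (η₁ η₂ : V → ℝ) (hη₁ : ∀ X, η₁ X = ⟪X, ξ₁⟫) (hη₂ : ∀ X, η₂ X = ⟪X, ξ₂⟫)
    (f : V →ₗ[ℝ] V) (hf₁ : f ξ₁ = 0) (hf₂ : f ξ₂ = 0)
    (R : V →ₗ[ℝ] V →ₗ[ℝ] V →ₗ[ℝ] V)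
    (F₁ F₂ F₃ F₄ F₅ F₆ F₇ F₈ : ℝ)
    (hR : ∀ X Y Z : V, R X Y Z =
      F₁ • (⟪Y, Z⟫ • X - ⟪X, Z⟫ • Y)
      + F₂ • (⟪X, f Z⟫ • f Y - ⟪Y, f Z⟫ • f X + (2 * ⟪X, f Y⟫) • f Z)
      + F₃ • ((η₁ X * η₁ Z) • Y - (η₁ Y * η₁ Z) • X
              + (⟪X, Z⟫ * η₁ Y) • ξ₁ - (⟪Y, Z⟫ * η₁ X) • ξ₁)
      + F₄ • ((η₂ X * η₂ Z) • Y - (η₂ Y * η₂ Z) • X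
              + (⟪X, Z⟫ * η₂ Y) • ξ₂ - (⟪Y, Z⟫ * η₂ X) • ξ₂)
      + F₅ • ((η₁ X * η₂ Z) • Y - (η₁ Y * η₂ Z) • X
              + (⟪X, Z⟫ * η₁ Y) • ξ₂ - (⟪Y, Z⟫ * η₁ X) • ξ₂)
      + F₆ • ((η₂ X * η₁ Z) • Y - (η₂ Y * η₁ Z) • X
              + (⟪X, Z⟫ * η₂ Y) • ξ₁ - (⟪Y, Z⟫ * η₂ X) • ξ₁)
      + F₇ • ((η₁ X * η₂ Y * η₂ Z) • ξ₁ - (η₂ X * η₁ Y * η₂ Z) • ξ₁)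
      + F₈ • ((η₂ X * η₁ Y * η₁ Z) • ξ₂ - (η₁ X * η₂ Y * η₁ Z) • ξ₂))
    (hskew : ∀ X Y Z W : V, ⟪R X Y Z, W⟫ = -⟪R X Y W, Z⟫) :
    F₇ = F₈ := by
  have h11 : ⟪ξ₁, ξ₁⟫ = 1 := by
    rw [real_inner_self_eq_norm_sq, hn₁]; norm_num
  have h22 : ⟪ξ₂, ξ₂⟫ = 1 := by
    rw [real_inner_self_eq_norm_sq, hn₂]; norm_num
  have h21 : ⟪ξ₂, ξ₁⟫ = 0 := by rw [real_inner_comm]; exact horth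
  have h := hskew ξ₁ ξ₂ ξ₂ ξ₁
  rw [hR, hR] at h
  simp [inner_add_left, inner_sub_left, inner_smul_left, hη₁, hη₂, hf₁, hf₂,
    h11, h22, horth, h21, hn₁, hn₂] at h
  linarith
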